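/- The non-associative Lyndon-Shirshov words form a linear basis of the free Lie algebra Lie(X), realized as the Lie subalgebra of the free associative algebra k⟨X⟩ generated by X. -/

import Mathlib

open List

/-- The lexicographic order used by Shirshov: a word is *greater* than any of its
proper extensions (`w > w ++ t` for `t ≠ []`), and otherwise words are compared
letterwise by the order on the alphabet.  `LSLt u v` means `u < v`. -/
def LSLt {X : Type*} [LinearOrder X] : List X → List X → Prop
  | _ :: _, [] => True
  | [], _ => False
  | a :: u, b :: v => a < b ∨ (a = b ∧ LSLt u v)

/-- `u ≤ v` in the Shirshov lexicographic order. -/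
def LSLe {X : Type*} [LinearOrder X] (u v : List X) : Prop := u = v ∨ LSLt u v

/-- The degree-lexicographic order: compare first by length, then lexicographically. -/
def DegLt {X : Type*} [LinearOrder X] (u v : List X) : Prop :=
  u.length < v.length ∨ (u.length = v.length ∧ LSLt u v)

/-- `≤` in the degree-lexicographic order. -/
def DegLe {X : Type*} [LinearOrder X] (u v : List X) : Prop := u = v ∨ DegLt u v

/-- An associative Lyndon–Shirshov word: a nonempty word `u` such that `vw > wv`
(lexicographically) for every factorization `u = vw` into nonempty parts. -/
def IsALSW {X : Type*} [LinearOrder X] (u : List X) : Prop :=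
  u ≠ [] ∧ ∀ v w : List X, v ≠ [] → w ≠ [] → u = v ++ w → LSLt (w ++ v) (v ++ w)

/-- The underlying associative word of a non-associative word (binary bracketing). -/
def wordOf {X : Type*} : FreeMagma X → List X
  | .of x => [x]
  | .mul a b => wordOf a ++ wordOf b

/-- `w` is the longest proper suffix of `u` which is an ALSW. -/
def LongestALSWProperSuffix {X : Type*} [LinearOrder X] (u w : List X) : Prop :=
  IsALSW w ∧ (∃ v : List X, v ≠ [] ∧ u = v ++ w) ∧
    ∀ w' : List X, IsALSW w' → (∃ v' : List X, v' ≠ [] ∧ u = v' ++ w') →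
      w'.length ≤ w.length

/-- The standard (up-to-down) bracketing of an ALSW: `[x] = x` and
`[u] = [[v][w]]` where `w` is the longest proper ALSW suffix of `u`. -/
inductive IsStdBracketing {X : Type*} [LinearOrder X] : List X → FreeMagma X → Prop
  | of (x : X) : IsStdBracketing [x] (.of x)
  | mul {v w : List X} {tv tw : FreeMagma X} :
      IsALSW (v ++ w) → LongestALSWProperSuffix (v ++ w) w →
      IsStdBracketing v tv → IsStdBracketing w tw →
      IsStdBracketing (v ++ w) (tv * tw)

/-- A non-associative Lyndon–Shirshov word, via Shirshov's conditions:
the underlying word is an ALSW, both halves are NLSWs, and the right factor of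
the left half is `≤` the right half. -/
inductive IsNLSW {X : Type*} [LinearOrder X] : FreeMagma X → Prop
  | of (x : X) : IsNLSW (.of x)
  | mul {tv tw : FreeMagma X} :
      IsNLSW tv → IsNLSW tw → IsALSW (wordOf (tv * tw)) →
      (∀ t₁ t₂ : FreeMagma X, tv = t₁ * t₂ → LSLe (wordOf t₂) (wordOf tw)) →
      IsNLSW (tv * tw)

/-- The free associative algebra `k⟨X⟩`, realized as the monoid algebra of the
free monoid on `X`. -/
abbrev FreeAssocAlg (k X : Type*) [Field k] := MonoidAlgebra k (FreeMonoid X)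

/-- The monomial of `k⟨X⟩` corresponding to a word `u ∈ X*`. -/
noncomputable def monom (k : Type*) [Field k] {X : Type*} (u : List X) : FreeAssocAlg k X :=
  MonoidAlgebra.single (FreeMonoid.ofList u) 1

/-- The coefficient of the word `u` in `f ∈ k⟨X⟩`. -/
def coeffW {k X : Type*} [Field k] (f : FreeAssocAlg k X) (u : List X) : k :=
  f.coeff (FreeMonoid.ofList u)

/-- `u` is the leading word of `f` with respect to the deg-lex order. -/
def IsLeadingWord {k X : Type*} [Field k] [LinearOrder X]
    (f : FreeAssocAlg k X) (u : List X) : Prop :=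
  coeffW f u ≠ 0 ∧ ∀ w : List X, coeffW f w ≠ 0 → w = u ∨ DegLt w u

/-- `f` is monic: its leading coefficient is `1`. -/
def IsMonic {k X : Type*} [Field k] [LinearOrder X] (f : FreeAssocAlg k X) : Prop :=
  ∃ u : List X, IsLeadingWord f u ∧ coeffW f u = 1

/-- The generator `x ∈ X` inside `k⟨X⟩`. -/
noncomputable def gen (k : Type*) [Field k] {X : Type*} (x : X) : FreeAssocAlg k X :=
  monom k [x]

attribute [local instance 100] LieRing.ofAssociativeRing

/-- The free Lie algebra `Lie(X)`: the Lie subalgebra of `k⟨X⟩` generated by `X`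
under the commutator bracket. -/
noncomputable def LieX (k X : Type*) [Field k] : LieSubalgebra k (FreeAssocAlg k X) :=
  LieSubalgebra.lieSpan k _ (Set.range (gen k (X := X)))

/-- Evaluation of a non-associative word in `k⟨X⟩`, interpreting the binary
operation as the commutator `(ab) = ab - ba`. -/
noncomputable def evalC {k X : Type*} [Field k] : FreeMagma X → FreeAssocAlg k X
  | .of x => gen k x
  | .mul a b => evalC a * evalC b - evalC b * evalC a

section Order
variable {X : Type*} [LinearOrder X]

@[simp] lemma lslt_nil_left {v : List X} : ¬ LSLt ([] : List X) v := by
  cases v <;> exact fun h => h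

@[simp] lemma lslt_cons_nil {a : X} {u : List X} : LSLt (a :: u) [] := trivial

lemma lslt_cons_iff {a b : X} {u v : List X} :
    LSLt (a :: u) (b :: v) ↔ a < b ∨ (a = b ∧ LSLt u v) := Iff.rfl

instance decLSLt : ∀ u v : List X, Decidable (LSLt u v)
  | _ :: _, [] => isTrue trivial
  | [], [] => isFalse (fun h => h)
  | [], _ :: _ => isFalse (fun h => h)
  | a :: u, b :: v =>
    haveI := decLSLt u v
    decidable_of_iff _ lslt_cons_iff.symm

instance decLSLe (u v : List X) : Decidable (LSLe u v) := by
  unfold LSLe; infer_instance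

lemma lslt_irrefl : ∀ u : List X, ¬ LSLt u u := by
  intro u; induction u with
  | nil => simp
  | cons a u ih =>
    rw [lslt_cons_iff]
    rintro (h | ⟨-, h⟩)
    · exact lt_irrefl _ h
    · exact ih h

lemma lslt_trans : ∀ {u v w : List X}, LSLt u v → LSLt v w → LSLt u w := by
  intro u; induction u with
  | nil => intro v w h; exact absurd h lslt_nil_left
  | cons a u ih =>
    intro v w h1 h2
    cases v with
    | nil => exact absurd h2 lslt_nil_left
    | cons b v =>
      cases w with
      | nil => exact lslt_cons_nil
      | cons c w =>
        rcases h1 with h1 | ⟨rfl, h1⟩ <;> rcases h2 with h2 | ⟨rfl, h2⟩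
        · exact Or.inl (h1.trans h2)
        · exact Or.inl h1
        · exact Or.inl h2
        · exact Or.inr ⟨rfl, ih h1 h2⟩

lemma lslt_total : ∀ u v : List X, u = v ∨ LSLt u v ∨ LSLt v u := by
  intro u; induction u with
  | nil => intro v; cases v with
    | nil => exact Or.inl rfl
    | cons b v => exact Or.inr (Or.inr lslt_cons_nil)
  | cons a u ih =>
    intro v; cases v with
    | nil => exact Or.inr (Or.inl lslt_cons_nil)
    | cons b v =>
      rcases lt_trichotomy a b with h | rfl | h
      · exact Or.inr (Or.inl (Or.inl h))
      · rcases ih v with rfl | h | h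
        · exact Or.inl rfl
        · exact Or.inr (Or.inl (Or.inr ⟨rfl, h⟩))
        · exact Or.inr (Or.inr (Or.inr ⟨rfl, h⟩))
      · exact Or.inr (Or.inr (Or.inl h))

lemma lslt_asymm {u v : List X} (h : LSLt u v) : ¬ LSLt v u :=
  fun h' => lslt_irrefl u (lslt_trans h h')

lemma lslt_ne {u v : List X} (h : LSLt u v) : u ≠ v := by
  rintro rfl; exact lslt_irrefl _ h

lemma lslt_append_left_iff : ∀ (u : List X) {v w : List X},
    LSLt (u ++ v) (u ++ w) ↔ LSLt v w := by
  intro u; induction u with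
  | nil => intro v w; rfl
  | cons a u ih => intro v w; simp [lslt_cons_iff, lt_irrefl, ih]

lemma lslt_append_self {u t : List X} (ht : t ≠ []) : LSLt (u ++ t) u := by
  induction u with
  | nil => cases t with
    | nil => exact absurd rfl ht
    | cons x ts => exact lslt_cons_nil
  | cons a u ih => exact Or.inr ⟨rfl, ih⟩

/-- `s` is smaller than `t` as decided by a strict letter comparison after a
common prefix. -/
def DBL {X : Type*} [LinearOrder X] (s t : List X) : Prop :=
  ∃ (p : List X) (a b : X) (s' t' : List X),
    a < b ∧ s = p ++ a :: s' ∧ t = p ++ b :: t'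

lemma dbl_append {s t α β : List X} (h : DBL s t) : LSLt (s ++ α) (t ++ β) := by
  obtain ⟨p, a, b, s', t', hab, rfl, rfl⟩ := h
  rw [append_assoc, append_assoc, lslt_append_left_iff]
  exact Or.inl hab

lemma dbl_lslt {s t : List X} (h : DBL s t) : LSLt s t := by
  have := dbl_append (α := []) (β := []) h
  simpa using this

lemma lslt_cases : ∀ {s t : List X}, LSLt s t →
    DBL s t ∨ ∃ r : List X, r ≠ [] ∧ s = t ++ r := by
  intro s; induction s with
  | nil => intro t h; exact absurd h lslt_nil_left
  | cons a s ih =>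
    intro t h
    cases t with
    | nil => exact Or.inr ⟨a :: s, by simp, rfl⟩
    | cons b t =>
      rcases h with h | ⟨rfl, h⟩
      · exact Or.inl ⟨[], a, b, s, t, h, rfl, rfl⟩
      · rcases ih h with hd | ⟨r, hr, rfl⟩
        · obtain ⟨p, x, y, s', t', hxy, rfl, rfl⟩ := hd
          exact Or.inl ⟨a :: p, x, y, s', t', hxy, rfl, rfl⟩
        · exact Or.inr ⟨r, hr, rfl⟩

lemma lslt_dbl_of_le_length {s t : List X} (h : LSLt s t)
    (hl : s.length ≤ t.length) : DBL s t := by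
  rcases lslt_cases h with hd | ⟨r, hr, rfl⟩
  · exact hd
  · exfalso
    rw [length_append] at hl
    have : r.length = 0 := by omega
    exact hr (length_eq_zero_iff.mp this)

lemma lslt_append_of_lslt_of_le_length {s t α β : List X} (h : LSLt s t)
    (hl : s.length ≤ t.length) : LSLt (s ++ α) (t ++ β) :=
  dbl_append (lslt_dbl_of_le_length h hl)

-- LSLe lemmas
lemma lsle_refl (u : List X) : LSLe u u := Or.inl rfl

lemma lsle_of_lslt {u v : List X} (h : LSLt u v) : LSLe u v := Or.inr h

lemma lsle_trans {u v w : List X} (h1 : LSLe u v) (h2 : LSLe v w) : LSLe u w := by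
  rcases h1 with rfl | h1
  · exact h2
  · rcases h2 with rfl | h2
    · exact Or.inr h1
    · exact Or.inr (lslt_trans h1 h2)

lemma lslt_of_lsle_of_lslt {u v w : List X} (h1 : LSLe u v) (h2 : LSLt v w) : LSLt u w := by
  rcases h1 with rfl | h1
  · exact h2
  · exact lslt_trans h1 h2

lemma lslt_of_lslt_of_lsle {u v w : List X} (h1 : LSLt u v) (h2 : LSLe v w) : LSLt u w := by
  rcases h2 with rfl | h2
  · exact h1
  · exact lslt_trans h1 h2

lemma lsle_append_left {u v w : List X} (h : LSLe v w) : LSLe (u ++ v) (u ++ w) := by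
  rcases h with rfl | h
  · exact lsle_refl _
  · exact Or.inr ((lslt_append_left_iff u).mpr h)

lemma lsle_append_right_of_length_eq {s t v : List X} (h : LSLe s t)
    (hl : s.length = t.length) : LSLe (s ++ v) (t ++ v) := by
  rcases h with rfl | h
  · exact lsle_refl _
  · exact Or.inr (lslt_append_of_lslt_of_le_length h hl.le)

lemma lsle_antisymm {u v : List X} (h1 : LSLe u v) (h2 : LSLe v u) : u = v := by
  rcases h1 with rfl | h1
  · rfl
  · rcases h2 with rfl | h2
    · rfl
    · exact absurd h2 (lslt_asymm h1)

end Order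
section ALSW
variable {X : Type*} [LinearOrder X]

lemma split_suffix {u v r s : List X} (h : u ++ v = r ++ s) (hl : s.length ≤ v.length) :
    ∃ p, r = u ++ p ∧ v = p ++ s := by
  have hlen : u.length ≤ r.length := by
    have := congrArg List.length h; simp only [length_append] at this; omega
  have hr : r = r.take u.length ++ r.drop u.length := (take_append_drop _ _).symm
  rw [hr, append_assoc] at h
  have hl2 : u.length = (r.take u.length).length := by
    rw [length_take]; omega
  obtain ⟨h1, h2⟩ := append_inj h hl2
  refine ⟨r.drop u.length, ?_, h2⟩
  rw [← h1] at hr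
  exact hr

lemma alsw_unbordered {u s e t : List X} (hu : IsALSW u) (hs : s ≠ []) (he : e ≠ [])
    (ht : t ≠ []) (h1 : u = s ++ e) (h2 : u = t ++ s) : False := by
  have r1 : LSLt (s ++ t) (t ++ s) := hu.2 t s ht hs h2
  have r2 : LSLt (e ++ s) (s ++ e) := hu.2 s e hs he h1
  have hte : t.length = e.length := by
    have := congrArg List.length (h1 ▸ h2); simp only [length_append] at this; omega
  rw [← h2, h1] at r1
  have hTE : LSLt t e := (lslt_append_left_iff s).mp r1
  rw [← h1, h2] at r2
  -- r2 : LSLt (e ++ s) (t ++ s), with t < e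
  have : LSLt (t ++ s) (e ++ s) := lslt_append_of_lslt_of_le_length hTE hte.le
  exact lslt_asymm this r2

/-- Every nonempty proper suffix of an ALSW is smaller than the word. -/
lemma alsw_suffix_lslt {u r s : List X} (hu : IsALSW u) (hr : r ≠ []) (hs : s ≠ [])
    (h : u = r ++ s) : LSLt s u := by
  rcases lslt_total s u with rfl | hlt | hgt
  · exfalso
    have := congrArg List.length h; simp only [length_append] at this
    have : r.length = 0 := by omega
    exact hr (length_eq_zero_iff.mp this)
  · exact hlt
  · exfalso
    rcases lslt_cases hgt with hd | ⟨r', hr', h'⟩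
    · have h1 : LSLt (u ++ []) (s ++ r) := dbl_append hd
      rw [append_nil] at h1
      have h2 : LSLt (s ++ r) (r ++ s) := hu.2 r s hr hs h
      rw [← h] at h2
      exact lslt_irrefl u (lslt_trans h1 h2)
    · exact alsw_unbordered hu hs hr' hr h' h

/-- Suffix characterization of ALSWs. -/
lemma alsw_of_suffix_lt {u : List X} (hu : u ≠ [])
    (H : ∀ r s : List X, r ≠ [] → s ≠ [] → u = r ++ s → LSLt s u) : IsALSW u := by
  refine ⟨hu, fun v w hv hw huvw => ?_⟩
  have h1 : LSLt w u := H v w hv hw huvw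
  have hlen : w.length ≤ u.length := by
    subst huvw; simp only [length_append]; omega
  have hd : DBL w u := lslt_dbl_of_le_length h1 hlen
  have := dbl_append (α := v) (β := []) hd
  rw [append_nil, huvw] at this
  exact this

/-- The maximal nonempty suffix of a nonempty word is an ALSW and dominates all
nonempty suffixes. -/
lemma exists_max_suffix : ∀ (x : List X), x ≠ [] →
    ∃ z : List X, z ≠ [] ∧ (∃ p, x = p ++ z) ∧ IsALSW z ∧
      ∀ y p', y ≠ [] → x = p' ++ y → LSLe y z := by
  intro x
  induction x with
  | nil => intro h; exact absurd rfl h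
  | cons a x ih =>
    intro _
    rcases eq_or_ne x [] with rfl | hx
    · refine ⟨[a], by simp, ⟨[], rfl⟩, ?_, ?_⟩
      · refine ⟨by simp, fun v w hv hw h => ?_⟩
        exfalso
        have := congrArg List.length h; simp only [length_append, length_cons] at this
        have h1 : 1 ≤ v.length := length_pos_iff.mpr hv
        have h2 : 1 ≤ w.length := length_pos_iff.mpr hw
        simp at this; omega
      · intro y p' hy h
        cases p' with
        | nil => exact Or.inl (by simpa using h.symm)
        | cons b p' =>
          exfalso
          have := congrArg List.length h
          simp only [length_cons, length_append] at this
          have h1 : 1 ≤ y.length := length_pos_iff.mpr hy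
          simp at this; omega
    · obtain ⟨z, hz, ⟨p, hp⟩, hzALSW, hmax⟩ := ih hx
      rcases lslt_total (a :: x) z with heq | hlt | hgt
      · exfalso
        have h1 := congrArg List.length heq
        have h2 : z.length ≤ x.length := by
          have := congrArg List.length hp; simp only [length_append] at this; omega
        simp only [length_cons] at h1; omega
      · refine ⟨z, hz, ⟨a :: p, by rw [hp]; rfl⟩, hzALSW, ?_⟩
        intro y p' hy h
        cases p' with
        | nil =>
          simp only [nil_append] at h
          exact Or.inr (h ▸ hlt)
        | cons b p' =>
          rw [cons_append] at h
          have h2 : x = p' ++ y := by injection h with _ h2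
          exact hmax y p' hy h2
      · -- a :: x is the max suffix
        have hsuf_lt : ∀ y p', y ≠ [] → p' ≠ [] → a :: x = p' ++ y → LSLt y (a :: x) := by
          intro y p' hy hp' h
          cases p' with
          | nil => exact absurd rfl hp'
          | cons b p'' =>
            have hxeq : x = p'' ++ y := by
              rw [cons_append] at h
              injection h with _ h2
            have := hmax y p'' hy hxeq
            exact lslt_of_lsle_of_lslt this hgt
        refine ⟨a :: x, by simp, ⟨[], rfl⟩, ?_, ?_⟩
        · exact alsw_of_suffix_lt (by simp) (fun r s hr hs h => hsuf_lt s r hs hr h)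
        · intro y p' hy h
          cases p' with
          | nil => exact Or.inl (by simpa using h.symm)
          | cons b p'' => exact Or.inr (hsuf_lt y (b :: p'') hy (by simp) h)

/-- Concatenation of ALSWs `a > b` is an ALSW. -/
lemma alsw_append {a b : List X} (ha : IsALSW a) (hb : IsALSW b) (h : LSLt b a) :
    IsALSW (a ++ b) := by
  have hb_ab : LSLt b (a ++ b) := by
    rcases lslt_cases h with hd | ⟨r, hr, hext⟩
    · have := dbl_append (α := []) (β := b) hd
      rwa [append_nil] at this
    · have h1 : LSLt r b := alsw_suffix_lslt hb ha.1 hr hext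
      rw [hext]
      rw [lslt_append_left_iff]
      rw [hext] at h1
      exact h1
  apply alsw_of_suffix_lt (by simp [ha.1])
  intro r s hr hs hsplit
  rcases le_or_gt s.length b.length with hle | hgt
  · obtain ⟨p, hp1, hp2⟩ := split_suffix hsplit hle
    rcases eq_or_ne p [] with rfl | hp
    · simp only [nil_append] at hp2
      subst hp2; exact hb_ab
    · exact lslt_trans (alsw_suffix_lslt hb hp hs hp2) hb_ab
  · -- s = p ++ b with p a nonempty proper suffix of a
    obtain ⟨p, hp1, hp2⟩ := split_suffix (u := r) (v := s) (r := a) (s := b)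
      hsplit.symm (by omega)
    have hpne : p ≠ [] := by
      rintro rfl; simp only [nil_append] at hp2; rw [hp2] at hgt; omega
    have hplt : LSLt p a := alsw_suffix_lslt ha hr hpne hp1
    have hpl : p.length ≤ a.length := by
      have := congrArg List.length hp1; simp only [length_append] at this; omega
    rw [hp2]
    exact lslt_append_of_lslt_of_le_length hplt hpl

lemma alsw_flip {a b : List X} (ha : IsALSW a) (hb : IsALSW b) (h : LSLt b a) :
    LSLt (b ++ a) (a ++ b) :=
  (alsw_append ha hb h).2 a b ha.1 hb.1 rfl

lemma alsw_flip_inv {a b : List X} (ha : IsALSW a) (hb : IsALSW b)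
    (h : LSLt (b ++ a) (a ++ b)) : LSLt b a := by
  rcases lslt_total b a with rfl | hlt | hgt
  · exact absurd h (lslt_irrefl _)
  · exact hlt
  · exact absurd (alsw_flip hb ha hgt) (lslt_asymm h)

/-- The left factor of the standard factorization of an ALSW is an ALSW. -/
lemma left_alsw_of_longest {u v w : List X} (hu : IsALSW u)
    (hl : LongestALSWProperSuffix u w) (huvw : u = v ++ w) (hv : v ≠ []) : IsALSW v := by
  apply alsw_of_suffix_lt hv
  intro r t hr ht hsplit
  by_contra hcon
  rcases lslt_total t v with rfl | hlt | hgt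
  · have := congrArg List.length hsplit; simp only [length_append] at this
    exact hr (length_eq_zero_iff.mp (by omega))
  · exact hcon hlt
  · rcases lslt_cases hgt with hd | ⟨rr, hrr, hext⟩
    · -- letter-decided v < t: contradiction with t ++ w < u
      have h1 : LSLt (v ++ w) (t ++ w) := dbl_append hd
      have h2 : LSLt (t ++ w) u :=
        alsw_suffix_lslt hu hr (by simp [ht]) (by rw [huvw, hsplit, append_assoc])
      rw [← huvw] at h1
      exact lslt_irrefl u (lslt_trans h1 h2)
    · -- v = t ++ rr : t is a prefix (and suffix) of v
      have hwrr : LSLt w (rr ++ w) := by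
        have h2 : LSLt (t ++ w) u :=
          alsw_suffix_lslt hu hr (by simp [ht]) (by rw [huvw, hsplit, append_assoc])
        rw [huvw, hext, append_assoc, lslt_append_left_iff] at h2
        exact h2
      obtain ⟨z, hz, ⟨p, hp⟩, hzALSW, hmax⟩ := exists_max_suffix (rr ++ w) (by simp [hrr])
      have hwz : LSLe w z := hmax w rr hl.1.1 rfl
      have hzsuffu : ∃ v', v' ≠ [] ∧ u = v' ++ z := by
        refine ⟨t ++ p, by simp [ht], ?_⟩
        rw [huvw, hext, append_assoc, hp, append_assoc]
      have hzlen : z.length ≤ w.length := hl.2.2 z hzALSW hzsuffu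
      -- z is a suffix of rr ++ w of length ≤ |w|, so z is a suffix of w
      obtain ⟨q, hq1, hq2⟩ := split_suffix (u := rr) (v := w) (r := p) (s := z) hp hzlen
      rcases eq_or_ne q [] with rfl | hq
      · simp only [nil_append] at hq2
        have h3 : LSLe (rr ++ w) z := hmax (rr ++ w) [] (by simp [hrr]) rfl
        rw [← hq2] at h3
        exact lslt_irrefl w (lslt_of_lslt_of_lsle hwrr h3)
      · have h3 : LSLt z w := alsw_suffix_lslt hl.1 hq hz hq2
        exact lslt_irrefl w (lslt_of_lsle_of_lslt hwz h3)

end ALSW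

section Std
variable {X : Type*} [LinearOrder X]

lemma std_word {u : List X} {t : FreeMagma X} (h : IsStdBracketing u t) : wordOf t = u := by
  induction h with
  | of x => rfl
  | mul _ _ _ _ ihv ihw => show wordOf _ ++ wordOf _ = _ ; rw [ihv, ihw]

lemma alsw_singleton (x : X) : IsALSW [x] := by
  refine ⟨by simp, fun v w hv hw h => ?_⟩
  exfalso
  have := congrArg List.length h
  have h1 : 1 ≤ v.length := length_pos_iff.mpr hv
  have h2 : 1 ≤ w.length := length_pos_iff.mpr hw
  simp only [length_cons, length_nil, length_append] at this; omega

lemma std_alsw {u : List X} {t : FreeMagma X} (h : IsStdBracketing u t) : IsALSW u := by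
  cases h with
  | of x => exact alsw_singleton x
  | mul h _ _ _ => exact h

lemma std_nonempty {u : List X} {t : FreeMagma X} (h : IsStdBracketing u t) : u ≠ [] :=
  (std_alsw h).1

lemma std_cases {u : List X} {t : FreeMagma X} (h : IsStdBracketing u t) :
    (∃ x, u = [x] ∧ t = .of x) ∨
      ∃ v w tv tw, u = v ++ w ∧ t = tv * tw ∧ IsALSW u ∧
        LongestALSWProperSuffix u w ∧ IsStdBracketing v tv ∧ IsStdBracketing w tw := by
  cases h with
  | of x => exact Or.inl ⟨x, rfl, rfl⟩
  | mul h1 h2 h3 h4 => exact Or.inr ⟨_, _, _, _, rfl, rfl, h1, h2, h3, h4⟩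

lemma std_unique {u : List X} {t t' : FreeMagma X}
    (h1 : IsStdBracketing u t) (h2 : IsStdBracketing u t') : t = t' := by
  induction h1 generalizing t' with
  | of x =>
    rcases std_cases h2 with ⟨y, hy, rfl⟩ | ⟨v, w, tv, tw, huvw, rfl, _, _, hv, hw⟩
    · obtain rfl : x = y := by injection hy
      rfl
    · exfalso
      have h1 : 1 ≤ v.length := length_pos_iff.mpr (std_nonempty hv)
      have h2 : 1 ≤ w.length := length_pos_iff.mpr (std_nonempty hw)
      have := congrArg List.length huvw
      simp only [length_cons, length_nil, length_append] at this; omega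
  | mul halsw hlong hv hw ihv ihw =>
    rename_i v w tv tw
    rcases std_cases h2 with ⟨y, hy, rfl⟩ | ⟨v', w', tv', tw', huvw, rfl, _, hlong', hv', hw'⟩
    · exfalso
      have h1 : 1 ≤ v.length := length_pos_iff.mpr (std_nonempty hv)
      have h2 : 1 ≤ w.length := length_pos_iff.mpr (std_nonempty hw)
      have := congrArg List.length hy
      simp only [length_cons, length_nil, length_append] at this; omega
    · have hlw : w.length = w'.length := by
        refine le_antisymm ?_ ?_
        · exact hlong'.2.2 _ hlong.1 ⟨_, std_nonempty hv, rfl⟩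
        · exact hlong.2.2 _ hlong'.1 ⟨_, std_nonempty hv', huvw⟩
      have hlv : v.length = v'.length := by
        have := congrArg List.length huvw
        simp only [length_append] at this; omega
      obtain ⟨rfl, rfl⟩ := append_inj huvw hlv
      rw [ihv hv', ihw hw']

/-- In a standard factorization `u = v ++ w` of an ALSW, `w < v`. -/
lemma alsw_factor_lt {v w : List X} (h : IsALSW (v ++ w)) (hv : IsALSW v) (hw : IsALSW w) :
    LSLt w v :=
  alsw_flip_inv hv hw (h.2 v w hv.1 hw.1 rfl)

open Classical in
lemma exists_longest {u : List X}
    (h : ∃ w : List X, IsALSW w ∧ ∃ v, v ≠ [] ∧ u = v ++ w) :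
    ∃ w, LongestALSWProperSuffix u w := by
  classical
  set P : ℕ → Prop := fun n => ∃ w : List X, w.length = n ∧ IsALSW w ∧ ∃ v, v ≠ [] ∧ u = v ++ w
    with hP
  obtain ⟨w0, hw0, v0, hv0, huv0⟩ := h
  have hw0len : w0.length ≤ u.length := by
    rw [huv0]; simp only [length_append]; omega
  have hPw0 : P w0.length := ⟨w0, rfl, hw0, v0, hv0, huv0⟩
  have hspec : P (Nat.findGreatest P u.length) :=
    Nat.findGreatest_spec (m := w0.length) hw0len hPw0
  obtain ⟨w, hwlen, hwALSW, v, hv, huv⟩ := hspec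
  refine ⟨w, hwALSW, ⟨v, hv, huv⟩, ?_⟩
  intro w' hw' ⟨v', hv', huv'⟩
  have hw'len : w'.length ≤ u.length := by
    rw [huv']; simp only [length_append]; omega
  have : w'.length ≤ Nat.findGreatest P u.length :=
    Nat.le_findGreatest hw'len ⟨w', rfl, hw', v', hv', huv'⟩
  omega

/-- Key lemma: if `u` is an ALSW whose longest proper ALSW suffix `w` satisfies
`w ≤ c` (`c` an ALSW with `c < u`), then no word `s ++ c` with `s` a nonempty
proper suffix of `u` is an ALSW. -/
lemma no_long_suffix {c : List X} (hc : IsALSW c) :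
    ∀ n : ℕ, ∀ s : List X, s.length = n → ∀ u w : List X,
      IsALSW u → LongestALSWProperSuffix u w → LSLe w c →
      (∃ r, r ≠ [] ∧ u = r ++ s) → s ≠ [] → ¬ IsALSW (s ++ c) := by
  intro n
  induction n using Nat.strong_induction_on with
  | _ n ih =>
  rintro s rfl u w hu hlong hwc ⟨r, hr, hurs⟩ hs hsc
  by_cases hsA : IsALSW s
  · -- s is an ALSW suffix of u, hence |s| ≤ |w| and s ≤ w ≤ c
    have hslen : s.length ≤ w.length := hlong.2.2 s hsA ⟨r, hr, hurs⟩
    obtain ⟨v, hv, huvw⟩ := hlong.2.1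
    obtain ⟨p, hp1, hp2⟩ := split_suffix (u := v) (v := w) (r := r) (s := s)
      (by rw [← huvw, ← hurs]) hslen
    have hsc' : LSLe s c := by
      rcases eq_or_ne p [] with rfl | hp
      · simp only [nil_append] at hp2
        rw [← hp2]; exact hwc
      · exact lsle_trans (lsle_of_lslt (alsw_suffix_lslt hlong.1 hp hs hp2)) hwc
    rcases hsc' with rfl | hlt
    · exact lslt_irrefl (s ++ s) (hsc.2 s s hs hs rfl)
    · exact lslt_asymm (alsw_flip hc hsA hlt) (hsc.2 s c hs hc.1 rfl)
  · -- s is not an ALSW; use the longest ALSW suffix of s ++ c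
    obtain ⟨m, hm⟩ := exists_longest (u := s ++ c) ⟨c, hc, s, hs, rfl⟩
    have hclen : c.length ≤ m.length := hm.2.2 c hc ⟨s, hs, rfl⟩
    obtain ⟨vm, hvm, hvmeq⟩ := hm.2.1
    rcases eq_or_ne m.length c.length with heq | hne
    · -- m = c, so by the standard-factorization lemma s is an ALSW: contradiction
      obtain ⟨rfl, rfl⟩ := append_inj hvmeq (by
        have := congrArg List.length hvmeq
        simp only [length_append] at this; omega)
      exact hsA (left_alsw_of_longest hsc hm rfl hs)
    · -- m = p ++ c with p a shorter nonempty proper suffix of u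
      have hmgt : c.length < m.length := by omega
      obtain ⟨p, hp1, hp2⟩ := split_suffix (u := vm) (v := m) (r := s) (s := c)
        hvmeq.symm (by omega)
      have hpne : p ≠ [] := by
        rintro rfl; simp only [nil_append] at hp2; rw [hp2] at hmgt; omega
      have hplen : p.length < s.length := by
        have := congrArg List.length hp1
        have hvml : 1 ≤ vm.length := length_pos_iff.mpr hvm
        simp only [length_append] at this; omega
      exact ih p.length hplen p rfl u w hu hlong hwc
        ⟨r ++ vm, by simp [hr], by rw [hurs, hp1, append_assoc]⟩ hpne (hp2 ▸ hm.1)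


lemma longest_of_concat {u c : List X} (hu : IsALSW u) (hc : IsALSW c) (hcu : LSLt c u)
    (hyp : u.length = 1 ∨ ∃ w, LongestALSWProperSuffix u w ∧ LSLe w c) :
    LongestALSWProperSuffix (u ++ c) c := by
  refine ⟨hc, ⟨u, hu.1, rfl⟩, ?_⟩
  rintro w' hw' ⟨v', hv', heq⟩
  by_contra hlen
  push_neg at hlen
  obtain ⟨p, hp1, hp2⟩ := split_suffix (u := v') (v := w') (r := u) (s := c)
    heq.symm (by omega)
  have hpne : p ≠ [] := by
    rintro rfl; simp only [nil_append] at hp2; rw [hp2] at hlen; omega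
  rcases hyp with h1 | ⟨w, hlong, hwc⟩
  · have := congrArg List.length hp1
    have hv'l : 1 ≤ v'.length := length_pos_iff.mpr hv'
    have hpl : 1 ≤ p.length := length_pos_iff.mpr hpne
    simp only [length_append] at this; omega
  · exact no_long_suffix hc p.length p rfl u w hu hlong hwc ⟨v', hv', hp1⟩ hpne (hp2 ▸ hw')

end Std

section Count
variable {X : Type*} [LinearOrder X]

noncomputable def countLE (u : List X) : ℕ :=
  u.permutations.countP (fun v => @decide (LSLe v u) (Classical.propDecidable _))

lemma countP_lt_countP {α : Type*} {p q : α → Bool} :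
    ∀ {l : List α}, (∀ a ∈ l, p a → q a) → ∀ x ∈ l, q x → ¬ p x →
      l.countP p < l.countP q := by
  intro l
  induction l with
  | nil => intro _ x hx; exact absurd hx not_mem_nil
  | cons a l ih =>
    intro hpq x hx hqx hpx
    rw [countP_cons, countP_cons]
    rcases mem_cons.mp hx with rfl | hx
    · have h1 : l.countP p ≤ l.countP q :=
        countP_mono_left (fun y hy => hpq y (mem_cons_of_mem _ hy))
      rw [if_pos hqx, if_neg hpx]
      omega
    · have h1 : l.countP p < l.countP q := ih (fun y hy => hpq y (mem_cons_of_mem _ hy)) x hx hqx hpx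
      have h2 : (if p a = true then 1 else 0) ≤ (if q a = true then 1 else 0) := by
        by_cases hpa : p a = true
        · simp [hpa, hpq a mem_cons_self hpa]
        · simp [hpa]
      omega

lemma countLE_lt {u v : List X} (hp : u.Perm v) (h : LSLt u v) : countLE u < countLE v := by
  classical
  unfold countLE
  rw [(hp.permutations).countP_eq]
  apply countP_lt_countP (x := v)
  · intro a _ ha
    simp only [decide_eq_true_eq] at ha ⊢
    exact lsle_trans ha (lsle_of_lslt h)
  · exact mem_permutations.2 (Perm.refl v)
  · simp only [decide_eq_true_eq]
    exact lsle_refl v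
  · simp only [decide_eq_true_eq]
    intro hle
    exact lslt_irrefl v (lslt_of_lsle_of_lslt hle h)

end Count

section Alg
variable {k X : Type*} [Field k] [LinearOrder X]

/-- All words appearing in `f` are permutations of `u` and `≤ u`. -/
def SuppLE (f : FreeAssocAlg k X) (u : List X) : Prop :=
  ∀ w : List X, coeffW f w ≠ 0 → w.Perm u ∧ LSLe w u

/-- `f` has leading word `u` with coefficient 1, all words permutations of `u`. -/
def Good (f : FreeAssocAlg k X) (u : List X) : Prop :=
  coeffW f u = 1 ∧ SuppLE f u

lemma coeffW_eq (f : FreeAssocAlg k X) (m : FreeMonoid X) :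
    f.coeff m = coeffW f (FreeMonoid.toList m) := by
  unfold coeffW
  rw [FreeMonoid.ofList_toList]

lemma suppLE_mul {f g : FreeAssocAlg k X} {a b : List X}
    (hf : SuppLE f a) (hg : SuppLE g b) : SuppLE (f * g) (a ++ b) := by
  classical
  intro w hw
  unfold coeffW at hw
  rw [MonoidAlgebra.mul_apply] at hw
  obtain ⟨a₁, ha₁, hinner⟩ := Finset.exists_ne_zero_of_sum_ne_zero hw
  obtain ⟨a₂, ha₂, hterm⟩ := Finset.exists_ne_zero_of_sum_ne_zero hinner
  dsimp only at hterm
  have hcond : a₁ * a₂ = FreeMonoid.ofList w := by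
    by_contra hc
    rw [if_neg hc] at hterm
    exact hterm rfl
  have hw_eq : w = FreeMonoid.toList a₁ ++ FreeMonoid.toList a₂ := by
    have := congrArg FreeMonoid.toList hcond
    rw [FreeMonoid.toList_mul, FreeMonoid.toList_ofList] at this
    exact this.symm
  have hfa : coeffW f (FreeMonoid.toList a₁) ≠ 0 := by
    rw [← coeffW_eq]; exact Finsupp.mem_support_iff.mp ha₁
  have hga : coeffW g (FreeMonoid.toList a₂) ≠ 0 := by
    rw [← coeffW_eq]; exact Finsupp.mem_support_iff.mp ha₂
  obtain ⟨hperm₁, hle₁⟩ := hf _ hfa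
  obtain ⟨hperm₂, hle₂⟩ := hg _ hga
  constructor
  · rw [hw_eq]; exact hperm₁.append hperm₂
  · rw [hw_eq]
    refine lsle_trans (lsle_append_right_of_length_eq hle₁ hperm₁.length_eq) ?_
    exact lsle_append_left hle₂

lemma coeffW_mul_lead {f g : FreeAssocAlg k X} {a b : List X}
    (hf : Good f a) (hg : Good g b) : coeffW (f * g) (a ++ b) = 1 := by
  classical
  unfold coeffW
  rw [MonoidAlgebra.mul_apply]
  simp only [Finsupp.sum]
  have haf : f.coeff (FreeMonoid.ofList a) = 1 := hf.1
  have hgb : g.coeff (FreeMonoid.ofList b) = 1 := hg.1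
  rw [Finset.sum_eq_single (FreeMonoid.ofList a), Finset.sum_eq_single (FreeMonoid.ofList b)]
  · rw [if_pos, haf, hgb, one_mul]
    show FreeMonoid.ofList a * FreeMonoid.ofList b = FreeMonoid.ofList (a ++ b)
    exact (FreeMonoid.ofList_append a b : _)
  · -- other a₂ give 0
    intro m hm hne
    rw [if_neg]
    intro hc
    have hw_eq : a ++ FreeMonoid.toList m = a ++ b := by
      have := congrArg FreeMonoid.toList hc
      rw [FreeMonoid.toList_mul, FreeMonoid.toList_ofList, FreeMonoid.toList_ofList] at this
      exact this
    have : FreeMonoid.toList m = b := by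
      exact (append_inj hw_eq rfl).2
    apply hne
    rw [← this, FreeMonoid.ofList_toList]
  · intro hnotmem
    rw [Finsupp.notMem_support_iff.mp hnotmem, mul_zero, ite_self]
  · -- other a₁ give 0 for the whole inner sum
    intro m hm hne
    apply Finset.sum_eq_zero
    intro m₂ hm₂
    rw [if_neg]
    intro hc
    have hw_eq : FreeMonoid.toList m ++ FreeMonoid.toList m₂ = a ++ b := by
      have := congrArg FreeMonoid.toList hc
      rw [FreeMonoid.toList_mul, FreeMonoid.toList_ofList] at this
      exact this
    have hfm : coeffW f (FreeMonoid.toList m) ≠ 0 := by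
      rw [← coeffW_eq]; exact Finsupp.mem_support_iff.mp hm
    have hlen : (FreeMonoid.toList m).length = a.length := (hf.2 _ hfm).1.length_eq
    have := (append_inj hw_eq hlen).1
    apply hne
    rw [← this, FreeMonoid.ofList_toList]
  · intro hnotmem
    apply Finset.sum_eq_zero
    intro m₂ _
    rw [Finsupp.notMem_support_iff.mp hnotmem, zero_mul, ite_self]

lemma coeffW_sub (f g : FreeAssocAlg k X) (u : List X) :
    coeffW (f - g) u = coeffW f u - coeffW g u := Finsupp.sub_apply f.coeff g.coeff _

lemma good_gen (x : X) : Good (gen k x) [x] := by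
  constructor
  · unfold gen monom coeffW MonoidAlgebra.single
    classical
    rw [Finsupp.single_apply, if_pos rfl]
  · intro w hw
    unfold gen monom coeffW MonoidAlgebra.single at hw
    classical
    rw [Finsupp.single_apply] at hw
    have : FreeMonoid.ofList [x] = FreeMonoid.ofList w := by
      by_contra hc; rw [if_neg hc] at hw; exact hw rfl
    have : w = [x] := by
      have := congrArg FreeMonoid.toList this
      rw [FreeMonoid.toList_ofList, FreeMonoid.toList_ofList] at this
      exact this.symm
    subst this
    exact ⟨Perm.refl _, lsle_refl _⟩

lemma evalC_mul (a b : FreeMagma X) :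
    evalC (k := k) (a * b) = evalC a * evalC b - evalC b * evalC a := rfl

lemma good_evalC {u : List X} {t : FreeMagma X} (h : IsStdBracketing u t) :
    Good (evalC (k := k) t) u := by
  induction h with
  | of x => exact good_gen x
  | mul halsw hlong hv hw ihv ihw =>
    rename_i v w tv tw
    have hva := std_alsw hv
    have hwa := std_alsw hw
    have hlt : LSLt w v := alsw_factor_lt halsw hva hwa
    have hflip : LSLt (w ++ v) (v ++ w) := alsw_flip hva hwa hlt
    rw [evalC_mul]
    have c2 : coeffW (evalC (k := k) tw * evalC tv) (v ++ w) = 0 := by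
      by_contra hc
      obtain ⟨_, hle⟩ := suppLE_mul (k := k) ihw.2 ihv.2 _ hc
      exact lslt_irrefl _ (lslt_of_lsle_of_lslt hle hflip)
    constructor
    · rw [coeffW_sub]
      have c1 : coeffW (evalC (k := k) tv * evalC tw) (v ++ w) = 1 := coeffW_mul_lead ihv ihw
      rw [c1, c2, sub_zero]
    · intro w' hw'
      rw [coeffW_sub] at hw'
      have : coeffW (evalC (k := k) tv * evalC tw) w' ≠ 0 ∨
          coeffW (evalC (k := k) tw * evalC tv) w' ≠ 0 := by
        by_contra hc
        push_neg at hc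
        rw [hc.1, hc.2, sub_zero] at hw'
        exact hw' rfl
      rcases this with hc | hc
      · exact suppLE_mul ihv.2 ihw.2 _ hc
      · obtain ⟨hperm, hle⟩ := suppLE_mul ihw.2 ihv.2 _ hc
        exact ⟨hperm.trans (perm_append_comm), lsle_of_lslt (lslt_of_lsle_of_lslt hle hflip)⟩

lemma evalC_mem_lieX (t : FreeMagma X) : evalC (k := k) t ∈ LieX k X := by
  induction t with
  | ih1 x => exact LieSubalgebra.subset_lieSpan ⟨x, rfl⟩
  | ih2 a b iha ihb =>
    rw [evalC_mul, ← Ring.lie_def]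
    exact LieSubalgebra.lie_mem _ iha ihb

end Alg

section Main
variable {k X : Type*} [Field k] [LinearOrder X]

def SpanSet (k : Type*) [Field k] {X : Type*} [LinearOrder X] (L : List X) :
    Set (FreeAssocAlg k X) :=
  {f | ∃ b : FreeMagma X, IsStdBracketing (wordOf b) b ∧ (wordOf b).Perm L ∧
    LSLe (wordOf b) L ∧ f = evalC b}

lemma spanSet_mono {L' L : List X} (hperm : L'.Perm L) (hle : LSLe L' L) :
    SpanSet k L' ⊆ SpanSet k L := by
  rintro f ⟨b, h1, h2, h3, rfl⟩
  exact ⟨b, h1, h2.trans hperm, lsle_trans h3 hle, rfl⟩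

lemma wordOf_mul (a b : FreeMagma X) : wordOf (a * b) = wordOf a ++ wordOf b := rfl

theorem main_rewrite : ∀ (n c d : ℕ) (p q : FreeMagma X),
    (wordOf p ++ wordOf q).length = n → countLE (wordOf p ++ wordOf q) = c →
    (wordOf p).length = d →
    IsStdBracketing (wordOf p) p → IsStdBracketing (wordOf q) q →
    LSLt (wordOf q) (wordOf p) →
    evalC (k := k) p * evalC q - evalC q * evalC p ∈
      Submodule.span k (SpanSet k (wordOf p ++ wordOf q)) := by
  intro n
  induction n using Nat.strong_induction_on with
  | _ n IHn =>
  intro c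
  induction c using Nat.strong_induction_on with
  | _ c IHc =>
  intro d
  induction d using Nat.strong_induction_on with
  | _ d IHd =>
  intro p q h1 h2 h3 hp hq hlt
  subst h1; subst h2; subst h3
  have easy_case : ((wordOf p).length = 1 ∨
      ∃ w, LongestALSWProperSuffix (wordOf p) w ∧ LSLe w (wordOf q)) →
      evalC (k := k) p * evalC q - evalC q * evalC p ∈
        Submodule.span k (SpanSet k (wordOf p ++ wordOf q)) := by
    intro hyp
    have hstd : IsStdBracketing (wordOf p ++ wordOf q) (p * q) :=
      IsStdBracketing.mul (alsw_append (std_alsw hp) (std_alsw hq) hlt)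
        (longest_of_concat (std_alsw hp) (std_alsw hq) hlt hyp) hp hq
    apply Submodule.subset_span
    exact ⟨p * q, by rw [wordOf_mul]; exact hstd, by rw [wordOf_mul],
      by rw [wordOf_mul]; exact lsle_refl _, (evalC_mul p q).symm⟩
  rcases std_cases hp with ⟨x, hax, rfl⟩ | ⟨v, w, p1, p2, hveq, rfl, halsw, hlongp, hp1, hp2⟩
  · exact easy_case (Or.inl (by rw [hax]; rfl))
  · have hwv : wordOf p1 = v := std_word hp1
    have hww : wordOf p2 = w := std_word hp2
    subst hwv; subst hww
    rcases lslt_total (wordOf p2) (wordOf q) with heq | hlt2 | hgt2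
    · exact easy_case (Or.inr ⟨wordOf p2, hlongp, Or.inl heq⟩)
    · exact easy_case (Or.inr ⟨wordOf p2, hlongp, Or.inr hlt2⟩)
    · -- Jacobi case: wordOf q < wordOf p2
      have halsw1 : IsALSW (wordOf p1) := std_alsw hp1
      have halsw2 : IsALSW (wordOf p2) := std_alsw hp2
      have halswq : IsALSW (wordOf q) := std_alsw hq
      have hp2p1 : LSLt (wordOf p2) (wordOf p1) := alsw_factor_lt halsw halsw1 halsw2
      have hqp1 : LSLt (wordOf q) (wordOf p1) := lslt_trans hgt2 hp2p1
      set A := evalC (k := k) p1 with hA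
      set B := evalC (k := k) p2 with hB
      set C := evalC (k := k) q with hC
      -- target span in right-associated form
      have htarg : SpanSet k (wordOf (p1 * p2) ++ wordOf q)
          = SpanSet k (wordOf p1 ++ (wordOf p2 ++ wordOf q)) := by
        rw [wordOf_mul, append_assoc]
      -- the three word-lengths relation
      have hlen1 : 1 ≤ (wordOf p1).length := length_pos_iff.mpr (std_nonempty hp1)
      have hlen2 : 1 ≤ (wordOf p2).length := length_pos_iff.mpr (std_nonempty hp2)
      have hlenq : 1 ≤ (wordOf q).length := length_pos_iff.mpr (std_nonempty hq)
      have hlenW : (wordOf (p1 * p2) ++ wordOf q).length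
          = (wordOf p1).length + (wordOf p2).length + (wordOf q).length := by
        rw [wordOf_mul]; simp only [length_append]
      -- membership from the two shorter pairs
      have T1mem : A * C - C * A ∈
          Submodule.span k (SpanSet k (wordOf p1 ++ wordOf q)) := by
        apply IHn ((wordOf p1 ++ wordOf q).length) ?_ (countLE (wordOf p1 ++ wordOf q))
          ((wordOf p1).length) p1 q rfl rfl rfl hp1 hq hqp1
        rw [hlenW]; simp only [length_append]; omega
      have T2mem : B * C - C * B ∈
          Submodule.span k (SpanSet k (wordOf p2 ++ wordOf q)) := by
        apply IHn ((wordOf p2 ++ wordOf q).length) ?_ (countLE (wordOf p2 ++ wordOf q))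
          ((wordOf p2).length) p2 q rfl rfl rfl hp2 hq hgt2
        rw [hlenW]; simp only [length_append]; omega
      -- H1 : bracketing with B on the right
      have H1 : ∀ f, f ∈ Submodule.span k (SpanSet k (wordOf p1 ++ wordOf q)) →
          f * B - B * f ∈ Submodule.span k (SpanSet k (wordOf (p1 * p2) ++ wordOf q)) := by
        intro f hf
        induction hf using Submodule.span_induction with
        | zero => simpa using Submodule.zero_mem _
        | add x y hx hy ihx ihy =>
          have he : (x + y) * B - B * (x + y) = (x * B - B * x) + (y * B - B * y) := by
            noncomm_ring
          rw [he]; exact Submodule.add_mem _ ihx ihy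
        | smul a x hx ihx =>
          have he : (a • x) * B - B * (a • x) = a • (x * B - B * x) := by
            rw [smul_mul_assoc, mul_smul_comm, smul_sub]
          rw [he]; exact Submodule.smul_mem _ _ ihx
        | mem g hg =>
          obtain ⟨b', hb'std, hb'perm, hb'le, rfl⟩ := hg
          rcases lslt_total (wordOf b') (wordOf p2) with heqw | hltw | hgtw
          · have hbp : b' = p2 := std_unique (heqw ▸ hb'std) hp2
            rw [hbp, hB, sub_self]
            exact Submodule.zero_mem _
          · -- wordOf b' < wordOf p2 : consider the pair (p2, b') and flip sign
            have hperm' : (wordOf p2 ++ wordOf b').Perm (wordOf (p1 * p2) ++ wordOf q) := by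
              rw [wordOf_mul, append_assoc]
              calc wordOf p2 ++ wordOf b'
                  ~ wordOf p2 ++ (wordOf p1 ++ wordOf q) := (Perm.refl _).append hb'perm
                _ = (wordOf p2 ++ wordOf p1) ++ wordOf q := by rw [append_assoc]
                _ ~ (wordOf p1 ++ wordOf p2) ++ wordOf q := perm_append_comm.append (Perm.refl _)
                _ = wordOf p1 ++ (wordOf p2 ++ wordOf q) := by rw [append_assoc]
            have hword' : LSLt (wordOf p2 ++ wordOf b') (wordOf (p1 * p2) ++ wordOf q) := by
              rw [wordOf_mul, append_assoc]
              have s1 : LSLe (wordOf p2 ++ wordOf b')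
                  (wordOf p2 ++ (wordOf p1 ++ wordOf q)) := lsle_append_left hb'le
              have s2 : LSLt ((wordOf p2 ++ wordOf p1) ++ wordOf q)
                  ((wordOf p1 ++ wordOf p2) ++ wordOf q) :=
                lslt_append_of_lslt_of_le_length (alsw_flip halsw1 halsw2 hp2p1)
                  (by simp [length_append]; omega)
              rw [append_assoc, append_assoc] at s2
              exact lslt_of_lsle_of_lslt s1 s2
            have hcnt : countLE (wordOf p2 ++ wordOf b')
                < countLE (wordOf (p1 * p2) ++ wordOf q) := countLE_lt hperm' hword'
            have hmem := IHc _ hcnt ((wordOf p2).length) p2 b'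
              hperm'.length_eq rfl rfl hp2 hb'std hltw
            have hmem2 : B * evalC b' - evalC b' * B ∈
                Submodule.span k (SpanSet k (wordOf (p1 * p2) ++ wordOf q)) :=
              Submodule.span_mono (spanSet_mono hperm' (lsle_of_lslt hword')) hmem
            have := Submodule.neg_mem _ hmem2
            rwa [neg_sub] at this
          · -- wordOf p2 < wordOf b' : pair (b', p2)
            have hperm' : (wordOf b' ++ wordOf p2).Perm (wordOf (p1 * p2) ++ wordOf q) := by
              rw [wordOf_mul, append_assoc]
              calc wordOf b' ++ wordOf p2
                  ~ (wordOf p1 ++ wordOf q) ++ wordOf p2 := hb'perm.append (Perm.refl _)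
                _ ~ wordOf p2 ++ (wordOf p1 ++ wordOf q) := perm_append_comm
                _ = (wordOf p2 ++ wordOf p1) ++ wordOf q := by rw [append_assoc]
                _ ~ (wordOf p1 ++ wordOf p2) ++ wordOf q := perm_append_comm.append (Perm.refl _)
                _ = wordOf p1 ++ (wordOf p2 ++ wordOf q) := by rw [append_assoc]
            have hword' : LSLt (wordOf b' ++ wordOf p2) (wordOf (p1 * p2) ++ wordOf q) := by
              rw [wordOf_mul, append_assoc]
              have s1 : LSLe (wordOf b' ++ wordOf p2)
                  ((wordOf p1 ++ wordOf q) ++ wordOf p2) :=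
                lsle_append_right_of_length_eq hb'le hb'perm.length_eq
              have s2 : LSLt ((wordOf p1 ++ wordOf q) ++ wordOf p2)
                  (wordOf p1 ++ (wordOf p2 ++ wordOf q)) := by
                rw [append_assoc]
                rw [lslt_append_left_iff]
                exact alsw_flip halsw2 halswq hgt2
              exact lslt_of_lsle_of_lslt s1 s2
            have hcnt : countLE (wordOf b' ++ wordOf p2)
                < countLE (wordOf (p1 * p2) ++ wordOf q) := countLE_lt hperm' hword'
            have hmem := IHc _ hcnt ((wordOf b').length) b' p2
              hperm'.length_eq rfl rfl hb'std hp2 hgtw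
            exact Submodule.span_mono (spanSet_mono hperm' (lsle_of_lslt hword')) hmem
      -- H2 : bracketing with A on the left
      have H2 : ∀ f, f ∈ Submodule.span k (SpanSet k (wordOf p2 ++ wordOf q)) →
          A * f - f * A ∈ Submodule.span k (SpanSet k (wordOf (p1 * p2) ++ wordOf q)) := by
        intro f hf
        induction hf using Submodule.span_induction with
        | zero => simpa using Submodule.zero_mem _
        | add x y hx hy ihx ihy =>
          have he : A * (x + y) - (x + y) * A = (A * x - x * A) + (A * y - y * A) := by
            noncomm_ring
          rw [he]; exact Submodule.add_mem _ ihx ihy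
        | smul a x hx ihx =>
          have he : A * (a • x) - (a • x) * A = a • (A * x - x * A) := by
            rw [smul_mul_assoc, mul_smul_comm, smul_sub]
          rw [he]; exact Submodule.smul_mem _ _ ihx
        | mem g hg =>
          obtain ⟨b'', hbstd, hbperm, hble, rfl⟩ := hg
          have hltb : LSLt (wordOf b'') (wordOf p1) := by
            refine lslt_of_lsle_of_lslt hble ?_
            exact lslt_trans (lslt_append_self (std_nonempty hq)) hp2p1
          have hlenb : (wordOf p1 ++ wordOf b'').length = (wordOf (p1 * p2) ++ wordOf q).length := by
            rw [hlenW]; simp only [length_append, hbperm.length_eq]; omega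
          rcases hble with heqw | hltw2
          · -- equal word : use IHd
            have hceq : countLE (wordOf p1 ++ wordOf b'')
                = countLE (wordOf (p1 * p2) ++ wordOf q) := by
              rw [heqw, wordOf_mul, append_assoc]
            have hmem := IHd ((wordOf p1).length) ?_ p1 b'' hlenb hceq rfl hp1 hbstd hltb
            · refine Submodule.span_mono (spanSet_mono ?_ ?_) hmem
              · rw [heqw, wordOf_mul, append_assoc]
              · rw [heqw, wordOf_mul, append_assoc]; exact lsle_refl _
            · rw [wordOf_mul]; simp [length_append]; omega
          · -- strictly smaller : use IHc
            have hword' : LSLt (wordOf p1 ++ wordOf b'') (wordOf (p1 * p2) ++ wordOf q) := by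
              rw [wordOf_mul, append_assoc, lslt_append_left_iff]
              exact hltw2
            have hperm' : (wordOf p1 ++ wordOf b'').Perm (wordOf (p1 * p2) ++ wordOf q) := by
              rw [wordOf_mul, append_assoc]
              exact (Perm.refl _).append hbperm
            have hcnt : countLE (wordOf p1 ++ wordOf b'')
                < countLE (wordOf (p1 * p2) ++ wordOf q) := countLE_lt hperm' hword'
            have hmem := IHc _ hcnt ((wordOf p1).length) p1 b'' hlenb rfl rfl hp1 hbstd hltb
            exact Submodule.span_mono (spanSet_mono hperm' (lsle_of_lslt hword')) hmem
      -- assemble via the Jacobi identity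
      have jac : evalC (k := k) (p1 * p2) * C - C * evalC (p1 * p2)
          = ((A * C - C * A) * B - B * (A * C - C * A))
            + (A * (B * C - C * B) - (B * C - C * B) * A) := by
        rw [evalC_mul, ← hA, ← hB]
        noncomm_ring
      rw [jac]
      exact Submodule.add_mem _ (H1 _ T1mem) (H2 _ T2mem)

end Main

section Assemble
variable {k X : Type*} [Field k] [LinearOrder X]

/-- The generating set of the NLSW span. -/
def GenSet (k : Type*) [Field k] (X : Type*) [LinearOrder X] : Set (FreeAssocAlg k X) :=
  {f | ∃ b : FreeMagma X, IsStdBracketing (wordOf b) b ∧ f = evalC b}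

lemma spanSet_subset_genSet (L : List X) : SpanSet k L ⊆ GenSet k X := by
  rintro f ⟨b, h1, _, _, rfl⟩
  exact ⟨b, h1, rfl⟩

lemma comm_mem_span {p q : FreeMagma X} (hp : IsStdBracketing (wordOf p) p)
    (hq : IsStdBracketing (wordOf q) q) :
    evalC (k := k) p * evalC q - evalC q * evalC p ∈ Submodule.span k (GenSet k X) := by
  rcases lslt_total (wordOf p) (wordOf q) with heq | hlt | hgt
  · obtain rfl : p = q := std_unique (heq ▸ hp) hq
    rw [sub_self]; exact Submodule.zero_mem _
  · have := main_rewrite (k := k) ((wordOf q ++ wordOf p).length)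
      (countLE (wordOf q ++ wordOf p)) ((wordOf q).length) q p rfl rfl rfl hq hp hlt
    have h2 := Submodule.span_mono (spanSet_subset_genSet (k := k) (wordOf q ++ wordOf p)) this
    have h3 := Submodule.neg_mem _ h2
    rwa [neg_sub] at h3
  · have := main_rewrite (k := k) ((wordOf p ++ wordOf q).length)
      (countLE (wordOf p ++ wordOf q)) ((wordOf p).length) p q rfl rfl rfl hp hq hgt
    exact Submodule.span_mono (spanSet_subset_genSet (k := k) (wordOf p ++ wordOf q)) this

lemma comm_mem_span' : ∀ x ∈ Submodule.span k (GenSet k X), ∀ y ∈ Submodule.span k (GenSet k X),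
    x * y - y * x ∈ Submodule.span k (GenSet k X) := by
  intro x hx
  induction hx using Submodule.span_induction with
  | mem f hf =>
    intro y hy
    induction hy using Submodule.span_induction with
    | mem g hg =>
      obtain ⟨p, hp, rfl⟩ := hf
      obtain ⟨q, hq, rfl⟩ := hg
      exact comm_mem_span hp hq
    | zero =>
      simp only [mul_zero, zero_mul, sub_self]
      exact Submodule.zero_mem _
    | add a b ha hb iha ihb =>
      have he : f * (a + b) - (a + b) * f = (f * a - a * f) + (f * b - b * f) := by noncomm_ring
      rw [he]; exact Submodule.add_mem _ iha ihb
    | smul c a ha iha =>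
      have he : f * (c • a) - (c • a) * f = c • (f * a - a * f) := by
        rw [smul_mul_assoc, mul_smul_comm, smul_sub]
      rw [he]; exact Submodule.smul_mem _ _ iha
  | zero =>
    intro y _
    simp only [mul_zero, zero_mul, sub_self]
    exact Submodule.zero_mem _
  | add a b ha hb iha ihb =>
    intro y hy
    have he : (a + b) * y - y * (a + b) = (a * y - y * a) + (b * y - y * b) := by noncomm_ring
    rw [he]; exact Submodule.add_mem _ (iha y hy) (ihb y hy)
  | smul c a ha iha =>
    intro y hy
    have he : (c • a) * y - y * (c • a) = c • (a * y - y * a) := by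
      rw [smul_mul_assoc, mul_smul_comm, smul_sub]
    rw [he]; exact Submodule.smul_mem _ _ (iha y hy)

/-- The span of the NLSWs as a Lie subalgebra. -/
noncomputable def NlswLie (k X : Type*) [Field k] [LinearOrder X] :
    LieSubalgebra k (FreeAssocAlg k X) :=
  { Submodule.span k (GenSet k X) with
    lie_mem' := fun {x y} hx hy => by
      rw [Ring.lie_def]
      exact comm_mem_span' x hx y hy }

lemma lieX_le_span : LieX k X ≤ NlswLie k X := by
  rw [LieX, LieSubalgebra.lieSpan_le]
  rintro f ⟨x, rfl⟩
  show gen k x ∈ Submodule.span k (GenSet k X)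
  apply Submodule.subset_span
  exact ⟨.of x, IsStdBracketing.of x, rfl⟩

/-- Degree-lex comparison facts. -/
lemma deglt_trans {u v w : List X} (h1 : DegLt u v) (h2 : DegLt v w) : DegLt u w := by
  rcases h1 with h1 | ⟨e1, h1⟩ <;> rcases h2 with h2 | ⟨e2, h2⟩
  · exact Or.inl (h1.trans h2)
  · exact Or.inl (e2 ▸ h1)
  · exact Or.inl (e1 ▸ h2)
  · exact Or.inr ⟨e1.trans e2, lslt_trans h1 h2⟩

lemma deglt_total {u v : List X} (h : u ≠ v) : DegLt u v ∨ DegLt v u := by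
  rcases Nat.lt_trichotomy u.length v.length with hl | hl | hl
  · exact Or.inl (Or.inl hl)
  · rcases lslt_total u v with rfl | h1 | h1
    · exact absurd rfl h
    · exact Or.inl (Or.inr ⟨hl, h1⟩)
    · exact Or.inr (Or.inr ⟨hl.symm, h1⟩)
  · exact Or.inr (Or.inl hl)

lemma exists_max_rel {α : Type*} (R : α → α → Prop)
    (htot : ∀ a b : α, a = b ∨ R a b ∨ R b a) (htrans : ∀ a b c, R a b → R b c → R a c) :
    ∀ l : List α, l ≠ [] → ∃ z ∈ l, ∀ y ∈ l, y = z ∨ R y z := by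
  intro l
  induction l with
  | nil => intro h; exact absurd rfl h
  | cons a l ih =>
    intro _
    rcases eq_or_ne l [] with rfl | hl
    · exact ⟨a, mem_cons_self, by
        intro y hy
        rcases mem_cons.mp hy with rfl | hy
        · exact Or.inl rfl
        · exact absurd hy not_mem_nil⟩
    · obtain ⟨z, hzmem, hzmax⟩ := ih hl
      rcases htot a z with rfl | hR | hR
      · exact ⟨a, mem_cons_of_mem _ hzmem, by
          intro y hy
          rcases mem_cons.mp hy with rfl | hy
          · exact Or.inl rfl
          · exact hzmax y hy⟩
      · exact ⟨z, mem_cons_of_mem _ hzmem, by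
          intro y hy
          rcases mem_cons.mp hy with rfl | hy
          · exact Or.inr hR
          · exact hzmax y hy⟩
      · refine ⟨a, mem_cons_self, ?_⟩
        intro y hy
        rcases mem_cons.mp hy with rfl | hy
        · exact Or.inl rfl
        · rcases hzmax y hy with rfl | hR2
          · exact Or.inr hR
          · exact Or.inr (htrans _ _ _ hR2 hR)

/-- Linear independence of the NLSW evaluations in `k⟨X⟩`. -/
lemma nlsw_linearIndependent :
    LinearIndependent k
      (fun t : {t : FreeMagma X // IsStdBracketing (wordOf t) t} => evalC (k := k) t.val) := by
  rw [linearIndependent_iff]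
  intro l hl
  by_contra hlne
  have hsupp : l.support.toList ≠ [] := by
    simp only [ne_eq, Finset.toList_eq_nil]
    exact fun h => hlne (Finsupp.support_eq_empty.mp h)
  obtain ⟨z, hzmem, hzmax⟩ := exists_max_rel
    (fun s t : {t : FreeMagma X // IsStdBracketing (wordOf t) t} =>
      DegLt (wordOf s.val) (wordOf t.val))
    (by
      intro a b
      rcases eq_or_ne (wordOf a.val) (wordOf b.val) with heq | hne
      · left
        have : a.val = b.val := std_unique (heq ▸ a.2) b.2
        exact Subtype.ext this
      · rcases deglt_total hne with h | h
        · exact Or.inr (Or.inl h)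
        · exact Or.inr (Or.inr h))
    (fun a b c => deglt_trans)
    l.support.toList hsupp
  have hzsupp : z ∈ l.support := by rwa [← Finset.mem_toList]
  have hterm : ∀ t ∈ l.support, t ≠ z →
      coeffW (evalC (k := k) t.val) (wordOf z.val) = 0 := by
    intro t _ htz
    by_contra hc
    have hgood := good_evalC (k := k) t.2
    have hsupp2 := hgood.2 (wordOf z.val) hc
    rcases hzmax t (by rwa [Finset.mem_toList]) with rfl | hdeg
    · exact htz rfl
    · rcases hdeg with hlen | ⟨hlen, hlex⟩
      · have := hsupp2.1.length_eq; omega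
      · exact lslt_irrefl _ (lslt_of_lsle_of_lslt hsupp2.2 hlex)
  have hco : ∑ t ∈ l.support, l t * coeffW (evalC (k := k) t.val) (wordOf z.val) = 0 := by
    have h0 := congrArg (fun f : FreeAssocAlg k X => coeffW f (wordOf z.val)) hl
    simp only [Finsupp.linearCombination_apply, Finsupp.sum] at h0
    have hz0 : coeffW (0 : FreeAssocAlg k X) (wordOf z.val) = 0 := rfl
    rw [hz0] at h0
    rw [← h0]
    unfold coeffW
    rw [MonoidAlgebra.coeff_sum, Finsupp.finset_sum_apply]
    refine Finset.sum_congr rfl ?_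
    intro t _
    rw [MonoidAlgebra.coeff_smul, Finsupp.smul_apply, smul_eq_mul]
  rw [Finset.sum_eq_single z] at hco
  · have h1 := (good_evalC (k := k) z.2).1
    rw [h1, mul_one] at hco
    exact (Finsupp.mem_support_iff.mp hzsupp) hco
  · intro t ht htz
    rw [hterm t ht htz, mul_zero]
  · intro hz
    exact absurd hzsupp hz

end Assemble

/-- The non-associative Lyndon–Shirshov words form a linear
basis of the free Lie algebra `Lie(X)`, realized as the Lie subalgebra of
`k⟨X⟩` generated by `X` under the commutator bracket. -/
theorem nlsw_basis_of_lieX {k X : Type*} [Field k] [LinearOrder X] :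
    ∃ b : Module.Basis {t : FreeMagma X // IsStdBracketing (wordOf t) t} k (LieX k X),
      ∀ t : {t : FreeMagma X // IsStdBracketing (wordOf t) t},
        (b t : FreeAssocAlg k X) = evalC (k := k) t.val := by
  classical
  let ι : LieX k X →ₗ[k] FreeAssocAlg k X :=
    { toFun := fun x => x.1, map_add' := fun x y => rfl, map_smul' := fun c x => rfl }
  have hι : Function.Injective ι := fun x y h => Subtype.ext h
  let v : {t : FreeMagma X // IsStdBracketing (wordOf t) t} → LieX k X :=
    fun t => ⟨evalC t.val, evalC_mem_lieX t.val⟩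
  have hcomp : ⇑ι ∘ v = fun t => evalC (k := k) t.val := rfl
  have hLI : LinearIndependent k v :=
    LinearIndependent.of_comp ι (by rw [hcomp]; exact nlsw_linearIndependent)
  have hGen : GenSet k X
      = Set.range (fun t : {t : FreeMagma X // IsStdBracketing (wordOf t) t} =>
          evalC (k := k) t.val) := by
    ext f
    constructor
    · rintro ⟨b, hb, rfl⟩; exact ⟨⟨b, hb⟩, rfl⟩
    · rintro ⟨⟨b, hb⟩, rfl⟩; exact ⟨b, hb, rfl⟩
  have hspan : ⊤ ≤ Submodule.span k (Set.range v) := by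
    intro x _
    have hx : (x : FreeAssocAlg k X) ∈ Submodule.span k (GenSet k X) := lieX_le_span x.2
    rw [hGen, ← hcomp, Set.range_comp, ← Submodule.map_span] at hx
    obtain ⟨y, hy, hyx⟩ := Submodule.mem_map.mp hx
    have hxy : y = x := Subtype.ext hyx
    rwa [← hxy]
  refine ⟨Module.Basis.mk hLI hspan, fun t => ?_⟩
  rw [Module.Basis.mk_apply]
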